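/- Let C_β, C_δ, C_R be positive reals with C_β > (e−1)·C_δ and C_β + C_δ < C_R. Then ∑_{k=1}^{∞} (C_β/(C_β+C_δ))^{k} · k^{−(C_β+C_δ)/C_R} > 1. -/

import Mathlib

/-- Proof of Proposition 6.19: if `C_β > (e−1)C_δ` and `C_β + C_δ < C_R`, then
`∑_{k=1}^∞ (C_β/(C_β+C_δ))^k k^{−(C_β+C_δ)/C_R} > 1`. -/
theorem stmt15 (Cβ Cδ CR : ℝ)
    (hCβ : 0 < Cβ) (hCδ : 0 < Cδ) (hCR : 0 < CR)
    (h1 : (Real.exp 1 - 1) * Cδ < Cβ) (h2 : Cβ + Cδ < CR) :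
    1 < ∑' k : ℕ, (Cβ / (Cβ + Cδ)) ^ (k + 1) *
      ((k : ℝ) + 1) ^ (-((Cβ + Cδ) / CR)) := by
  set r : ℝ := Cβ / (Cβ + Cδ) with hr
  set s : ℝ := (Cβ + Cδ) / CR with hs
  have hsum : 0 < Cβ + Cδ := by linarith
  have hr0 : 0 < r := div_pos hCβ hsum
  have hr1 : r < 1 := (div_lt_one hsum).mpr (by linarith)
  have hs0 : 0 < s := div_pos hsum hCR
  have hs1 : s < 1 := (div_lt_one hCR).mpr h2
  -- log series
  have hlog : HasSum (fun n : ℕ => r ^ (n + 1) / (n + 1)) (-Real.log (1 - r)) :=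
    Real.hasSum_pow_div_log_of_abs_lt_one (by rw [abs_of_pos hr0]; exact hr1)
  -- 1 - r = Cδ / (Cβ + Cδ)
  have h1r : 1 - r = Cδ / (Cβ + Cδ) := by
    field_simp [hr]
    rw [hr, sub_mul, div_mul_cancel₀ _ hsum.ne']; ring
  have hlt : 1 - r < Real.exp (-1) := by
    rw [h1r, Real.exp_neg, div_lt_iff₀ hsum]
    rw [inv_mul_eq_div, lt_div_iff₀ (Real.exp_pos 1)]
    nlinarith [Real.exp_pos 1]
  have hpos1r : 0 < 1 - r := by linarith
  have hloglt : 1 < -Real.log (1 - r) := by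
    have := Real.log_lt_log hpos1r hlt
    rw [Real.log_exp] at this
    linarith
  -- termwise bound
  have hterm : ∀ n : ℕ, r ^ (n + 1) / (n + 1) ≤ r ^ (n + 1) * ((n : ℝ) + 1) ^ (-s) := by
    intro n
    have hb : (1 : ℝ) ≤ (n : ℝ) + 1 := by have := Nat.cast_nonneg (α := ℝ) n; linarith
    have h1 : ((n : ℝ) + 1) ^ (-(1 : ℝ)) ≤ ((n : ℝ) + 1) ^ (-s) :=
      Real.rpow_le_rpow_of_exponent_le hb (by linarith)
    have h2 : ((n : ℝ) + 1) ^ (-(1 : ℝ)) = ((n : ℝ) + 1)⁻¹ := by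
      rw [Real.rpow_neg_one]
    rw [div_eq_mul_inv, ← h2]
    exact mul_le_mul_of_nonneg_left h1 (by positivity)
  -- summability of target
  have hsummable : Summable (fun n : ℕ => r ^ (n + 1) * ((n : ℝ) + 1) ^ (-s)) := by
    apply Summable.of_nonneg_of_le (fun n => by positivity)
      (fun n => ?_) ((summable_geometric_of_lt_one hr0.le hr1).mul_left r)
    have hle : ((n : ℝ) + 1) ^ (-s) ≤ 1 := by
      exact Real.rpow_le_one_of_one_le_of_nonpos (by have := Nat.cast_nonneg (α := ℝ) n; linarith) (by linarith)
    calc r ^ (n + 1) * ((n : ℝ) + 1) ^ (-s) ≤ r ^ (n + 1) * 1 :=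
          mul_le_mul_of_nonneg_left hle (by positivity)
      _ = r * r ^ n := by ring
  calc (1 : ℝ) < -Real.log (1 - r) := hloglt
    _ = ∑' n : ℕ, r ^ (n + 1) / (n + 1) := hlog.tsum_eq.symm
    _ ≤ ∑' n : ℕ, r ^ (n + 1) * ((n : ℝ) + 1) ^ (-s) :=
        Summable.tsum_le_tsum hterm hlog.summable hsummable
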